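/- Let s ≥ 2 and let D be a saturated design of strength 2 in N = 2s² runs with one factor at 2s levels and 2s factors at s levels (so 1·(2s−1) + 2s·(s−1) = N − 1). Then for every k ≥ 3, the projection D' of D onto any k of the s-level factors satisfies GR(D') = 4 − sqrt((s − 2)/(2s − 2)) (with R = 3), and this value is optimum: every design of strength 2 in 2s² runs with k factors at s levels has GR at most 4 − sqrt((s − 2)/(2s − 2)). -/

import Mathlib

open Finset Matrix

/-- A design `D` (rows = runs, coordinates = factors) has strength `t` if in every
projection onto `t` factors every level combination occurs equally often. -/
def hasStrength {N n : ℕ} (s : Fin n → ℕ) (D : Fin N → ∀ i, Fin (s i)) (t : ℕ) : Prop :=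
  ∀ T : Finset (Fin n), T.card = t → ∀ x : ∀ i, Fin (s i),
    (Finset.univ.filter fun r => ∀ i ∈ T, D r i = x i).card = N / ∏ i ∈ T, s i

/-- Normalized orthogonal coding: contrast columns have zero sum and
`Cᵀ C = m • 1` (squared length `m`, pairwise orthogonal). -/
def isNOC {m : ℕ} (C : Fin m → Fin (m - 1) → ℝ) : Prop :=
  (∀ j, ∑ l, C l j = 0) ∧
    ∀ j j', ∑ l, C l j * C l j' = if j = j' then (m : ℝ) else 0

/-- Column (indexed by the tuple `j`) of the interaction model matrix of the set `U`
of factors, evaluated at run `r`. -/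
def intCol {N n : ℕ} {s : Fin n → ℕ} (C : ∀ i, Fin (s i) → Fin (s i - 1) → ℝ)
    (D : Fin N → ∀ i, Fin (s i)) (U : Finset (Fin n))
    (j : ∀ i : U, Fin (s i.1 - 1)) (r : Fin N) : ℝ :=
  ∏ i : U, C i.1 (D r i.1) (j i)

/-- Projection frequency `a_k(U)`: sum of squared column sums of the interaction
model matrix of `U`, divided by `N²`. -/
noncomputable def projFreq {N n : ℕ} {s : Fin n → ℕ}
    (C : ∀ i, Fin (s i) → Fin (s i - 1) → ℝ)
    (D : Fin N → ∀ i, Fin (s i)) (U : Finset (Fin n)) : ℝ :=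
  (∑ j : ∀ i : U, Fin (s i.1 - 1), (∑ r, intCol C D U j r) ^ 2) / (N : ℝ) ^ 2

/-- Generalized resolution `GR = R + 1 - sqrt(max_U a_R(U)/(min_{i∈U} s i - 1))`,
the max running over all `R`-element sets of factors. -/
noncomputable def GR {N n : ℕ} {s : Fin n → ℕ} (R : ℕ)
    (C : ∀ i, Fin (s i) → Fin (s i - 1) → ℝ) (D : Fin N → ∀ i, Fin (s i)) : ℝ :=
  (R : ℝ) + 1 - Real.sqrt (sSup {v : ℝ | ∃ U : Finset (Fin n), U.card = R ∧
    v = projFreq C D U / (((sInf (s '' (U : Set (Fin n))) : ℕ) : ℝ) - 1)})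

/-- for a saturated `OA(2s², (2s)¹ s^{2s}, 2)` (one factor at `2s` levels,
`2s` factors at `s` levels), every projection onto `k ≥ 3` of the `s`-level factors has
`GR = 4 - sqrt((s-2)/(2s-2))`, and this is optimal among all strength-2 designs in
`2s²` runs with `k` factors at `s` levels. -/
theorem NOC_row {m : ℕ} (hm : 1 ≤ m) (C : Fin m → Fin (m - 1) → ℝ) (h : isNOC C)
    (l l' : Fin m) : ∑ j, C l j * C l' j = (if l = l' then (m : ℝ) else 0) - 1 := by
  obtain ⟨m', rfl⟩ : ∃ m', m = m' + 1 := ⟨m - 1, by omega⟩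
  have hm1 : (m' + 1 : ℕ) - 1 = m' := rfl
  set A : Matrix (Fin (m' + 1)) (Fin (m' + 1)) ℝ :=
    Matrix.of (fun l => Fin.cons 1 (fun j => C l j)) with hA
  have h1 : Aᵀ * A = ((m' + 1 : ℕ) : ℝ) • 1 := by
    ext j j'
    simp only [Matrix.mul_apply, Matrix.transpose_apply, Matrix.smul_apply, Matrix.one_apply, hA,
      Matrix.of_apply]
    induction j using Fin.cases with
    | zero =>
      induction j' using Fin.cases with
      | zero => simp
      | succ j' => simpa [(Fin.succ_ne_zero j').symm] using h.1 j'
    | succ j =>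
      induction j' using Fin.cases with
      | zero => simpa using h.1 j
      | succ j' =>
        have := h.2 j j'
        simpa [Fin.succ_inj] using this
  have hmne : ((m' + 1 : ℕ) : ℝ) ≠ 0 := by positivity
  have h2 : A * Aᵀ = ((m' + 1 : ℕ) : ℝ) • 1 := by
    have hinv : (((m' + 1 : ℕ) : ℝ)⁻¹ • Aᵀ) * A = 1 := by
      rw [Matrix.smul_mul, h1, smul_smul, inv_mul_cancel₀ hmne, one_smul]
    have := mul_eq_one_comm.mp hinv
    rw [Matrix.mul_smul, inv_smul_eq_iff₀ hmne] at this
    exact this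
  have := congrFun (congrFun h2 l) l'
  simp only [Matrix.mul_apply, Matrix.transpose_apply, Matrix.smul_apply, Matrix.one_apply, hA,
    Matrix.of_apply] at this
  rw [Fin.sum_univ_succ] at this
  simp only [Fin.cons_zero, Fin.cons_succ, one_mul] at this
  have goal' : ∑ j : Fin m', C l j * C l' j = (if l = l' then ((m' + 1 : ℕ) : ℝ) else 0) - 1 := by
    by_cases hll : l = l' <;> simp [hll] at this ⊢ <;> linarith
  exact goal'

theorem cnt2 {N n : ℕ} {s : Fin n → ℕ} (hs : ∀ i, 0 < s i) (D : Fin N → ∀ i, Fin (s i))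
    (hD : hasStrength s D 2) {i₁ i₂ : Fin n} (h : i₁ ≠ i₂) (x₁ : Fin (s i₁)) (x₂ : Fin (s i₂)) :
    (univ.filter fun r => D r i₁ = x₁ ∧ D r i₂ = x₂).card = N / (s i₁ * s i₂) := by
  classical
  set x : ∀ i, Fin (s i) :=
    Function.update (Function.update (fun i => ⟨0, hs i⟩) i₁ x₁) i₂ x₂ with hx
  have hx1 : x i₁ = x₁ := by
    rw [hx, Function.update_of_ne h, Function.update_self]
  have hx2 : x i₂ = x₂ := by rw [hx, Function.update_self]
  have := hD {i₁, i₂} (by rw [card_insert_of_notMem (by simpa using h), card_singleton]) x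
  rw [prod_pair h] at this
  rw [← this]
  congr 1
  ext r
  simp only [mem_filter, mem_univ, true_and, mem_insert, mem_singleton]
  constructor
  · rintro ⟨h1, h2⟩ i hi
    rcases hi with rfl | rfl
    · rw [hx1]; exact h1
    · rw [hx2]; exact h2
  · intro hi
    exact ⟨hx1 ▸ hi i₁ (Or.inl rfl), hx2 ▸ hi i₂ (Or.inr rfl)⟩

theorem cnt1 {N n : ℕ} {s : Fin n → ℕ} (hs : ∀ i, 0 < s i) (D : Fin N → ∀ i, Fin (s i))
    (hD : hasStrength s D 2) {i₁ i₂ : Fin n} (h : i₁ ≠ i₂) (x₁ : Fin (s i₁)) :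
    (univ.filter fun r => D r i₁ = x₁).card = s i₂ * (N / (s i₁ * s i₂)) := by
  classical
  have hcard : (univ.filter fun r => D r i₁ = x₁).card
      = ∑ x₂ : Fin (s i₂), (univ.filter fun r => D r i₁ = x₁ ∧ D r i₂ = x₂).card := by
    rw [Finset.card_eq_sum_card_fiberwise (f := fun r => D r i₂)
      (t := univ) (fun x _ => mem_univ _)]
    refine Finset.sum_congr rfl fun x₂ _ => ?_
    rw [Finset.filter_filter]
  rw [hcard]
  simp only [cnt2 hs D hD h x₁]
  rw [Finset.sum_const, card_univ, Fintype.card_fin, smul_eq_mul]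

theorem PF {N' k sl : ℕ} (hsl : 2 ≤ sl) (E : Fin N' → Fin k → Fin sl)
    (C' : Fin k → Fin sl → Fin (sl - 1) → ℝ) (hC' : ∀ i, isNOC (C' i))
    (hc1 : ∀ i x, ((univ.filter fun r => E r i = x).card = 2 * sl))
    (hc2 : ∀ i₁ i₂ : Fin k, i₁ ≠ i₂ → ∀ x₁ x₂,
      ((univ.filter fun r => E r i₁ = x₁ ∧ E r i₂ = x₂).card = 2))
    (U : Finset (Fin k)) (hU : U.card = 3) :
    projFreq (s := fun _ => sl) C' E U =
      ((sl : ℝ) ^ 3 * (∑ r, ∑ r', ∏ i ∈ U, (if E r i = E r' i then (1 : ℝ) else 0))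
        - (N' : ℝ) ^ 2) / (N' : ℝ) ^ 2 := by
  classical
  -- Step 1: numerator = ∑_{r,r'} ∏_{i∈U} (sl·δ - 1)
  have step1 : ∑ j : ∀ i : U, Fin (sl - 1), (∑ r, intCol (s := fun _ => sl) C' E U j r) ^ 2
      = ∑ r, ∑ r', ∏ i ∈ U,
          ((sl : ℝ) * (if E r i = E r' i then (1 : ℝ) else 0) - 1) := by
    have h1 : ∀ j : ∀ i : U, Fin (sl - 1),
        (∑ r, intCol (s := fun _ => sl) C' E U j r) ^ 2
        = ∑ r, ∑ r', intCol (s := fun _ => sl) C' E U j r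
            * intCol (s := fun _ => sl) C' E U j r' := by
      intro j; rw [sq, Finset.sum_mul_sum]
    rw [Finset.sum_congr rfl fun j _ => h1 j]
    rw [Finset.sum_comm]
    refine Finset.sum_congr rfl fun r _ => ?_
    rw [Finset.sum_comm]
    refine Finset.sum_congr rfl fun r' _ => ?_
    have h2 : ∀ j : ∀ i : U, Fin (sl - 1),
        intCol (s := fun _ => sl) C' E U j r * intCol (s := fun _ => sl) C' E U j r'
        = ∏ i : U, (C' i.1 (E r i.1) (j i) * C' i.1 (E r' i.1) (j i)) := by
      intro j; rw [intCol, intCol, ← Finset.prod_mul_distrib]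
    rw [Finset.sum_congr rfl fun j _ => h2 j]
    have h3 : ∑ j : ∀ i : U, Fin (sl - 1),
        ∏ i : U, (C' i.1 (E r i.1) (j i) * C' i.1 (E r' i.1) (j i))
        = ∏ i : U, ∑ jv : Fin (sl - 1), C' i.1 (E r i.1) jv * C' i.1 (E r' i.1) jv := by
      rw [Finset.prod_univ_sum (t := fun _ => univ)]
      rw [← Fintype.piFinset_univ]
    rw [h3]
    have h4 : ∀ i : U, ∑ jv : Fin (sl - 1), C' i.1 (E r i.1) jv * C' i.1 (E r' i.1) jv
        = (sl : ℝ) * (if E r i.1 = E r' i.1 then (1 : ℝ) else 0) - 1 := by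
      intro i
      rw [NOC_row (by omega) (C' i.1) (hC' i.1)]
      by_cases h : E r i.1 = E r' i.1 <;> simp [h]
    rw [Finset.prod_congr rfl fun i _ => h4 i]
    exact Finset.prod_coe_sort U (fun i => (sl : ℝ) * (if E r i = E r' i then (1 : ℝ) else 0) - 1)
  obtain ⟨a, b, c, hab, hac, hbc, rfl⟩ := Finset.card_eq_three.mp hU
  have prodex : ∀ f : Fin k → ℝ, ∏ i ∈ ({a, b, c} : Finset (Fin k)), f i = f a * f b * f c := by
    intro f
    rw [Finset.prod_insert (by simp [hab, hac]), Finset.prod_insert (by simp [hbc]),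
      Finset.prod_singleton, mul_assoc]
  set d : Fin k → Fin N' → Fin N' → ℝ :=
    fun i r r' => if E r i = E r' i then 1 else 0 with hd
  have S1 : ∀ i : Fin k, ∑ r, ∑ r', d i r r' = (N' : ℝ) * (2 * sl) := by
    intro i
    have inner : ∀ r, ∑ r', d i r r' = ((2 * sl : ℕ) : ℝ) := by
      intro r
      have : ∀ r', d i r r' = if E r' i = E r i then (1 : ℝ) else 0 := by
        intro r'; simp [hd, eq_comm]
      rw [Finset.sum_congr rfl fun r' _ => this r', Finset.sum_boole, hc1 i (E r i)]
    rw [Finset.sum_congr rfl fun r _ => inner r, Finset.sum_const, card_univ, Fintype.card_fin,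
      nsmul_eq_mul]
    push_cast; ring
  have S2 : ∀ i₁ i₂ : Fin k, i₁ ≠ i₂ → ∑ r, ∑ r', d i₁ r r' * d i₂ r r' = (N' : ℝ) * 2 := by
    intro i₁ i₂ h
    have inner : ∀ r, ∑ r', d i₁ r r' * d i₂ r r' = ((2 : ℕ) : ℝ) := by
      intro r
      have : ∀ r', d i₁ r r' * d i₂ r r'
          = if E r' i₁ = E r i₁ ∧ E r' i₂ = E r i₂ then (1 : ℝ) else 0 := by
        intro r'
        simp only [hd]
        by_cases h1 : E r i₁ = E r' i₁ <;> by_cases h2 : E r i₂ = E r' i₂ <;>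
          simp [h1, h2, eq_comm]
      rw [Finset.sum_congr rfl fun r' _ => this r', Finset.sum_boole, hc2 i₁ i₂ h (E r i₁) (E r i₂)]
    rw [Finset.sum_congr rfl fun r _ => inner r, Finset.sum_const, card_univ, Fintype.card_fin,
      nsmul_eq_mul]
    push_cast; ring
  have hsum : ∑ r, ∑ r', ∏ i ∈ ({a, b, c} : Finset (Fin k)),
        ((sl : ℝ) * d i r r' - 1)
      = (sl : ℝ) ^ 3 * (∑ r, ∑ r', d a r r' * d b r r' * d c r r') - (N' : ℝ) ^ 2 := by
    have point : ∀ r r', ∏ i ∈ ({a, b, c} : Finset (Fin k)), ((sl : ℝ) * d i r r' - 1)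
        = (sl : ℝ) ^ 3 * (d a r r' * d b r r' * d c r r')
          - (sl : ℝ) ^ 2 * (d a r r' * d b r r' + d a r r' * d c r r' + d b r r' * d c r r')
          + (sl : ℝ) * (d a r r' + d b r r' + d c r r') - 1 := by
      intro r r'; rw [prodex]; ring
    rw [Finset.sum_congr rfl fun r _ => Finset.sum_congr rfl fun r' _ => point r r']
    simp only [Finset.sum_add_distrib, Finset.sum_sub_distrib, ← Finset.mul_sum,
      Finset.sum_const, card_univ, Fintype.card_fin, nsmul_eq_mul, mul_one]
    rw [S1 a, S1 b, S1 c, S2 a b hab, S2 a c hac, S2 b c hbc]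
    push_cast; ring
  unfold projFreq
  rw [step1]
  simp only [hd] at hsum
  rw [hsum]
  have hM : (∑ r, ∑ r', (if E r a = E r' a then (1 : ℝ) else 0)
        * (if E r b = E r' b then (1 : ℝ) else 0) * (if E r c = E r' c then (1 : ℝ) else 0))
      = ∑ r, ∑ r', ∏ i ∈ ({a, b, c} : Finset (Fin k)),
          (if E r i = E r' i then (1 : ℝ) else 0) := by
    refine Finset.sum_congr rfl fun r _ => Finset.sum_congr rfl fun r' _ => ?_
    rw [prodex]
  rw [hM]

theorem key {sl : ℕ} (hsl : 2 ≤ sl) (levels : Fin (2 * sl + 1) → ℕ)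
    (hlev : ∀ i, levels i = if i = (0 : Fin (2 * sl + 1)) then 2 * sl else sl)
    (D : Fin (2 * sl ^ 2) → ∀ i, Fin (levels i)) (hD : hasStrength levels D 2)
    {r₀ r₁ : Fin (2 * sl ^ 2)} (hrr : r₀ ≠ r₁) :
    ∑ i, (levels i : ℝ) * (if D r₀ i = D r₁ i then 1 else 0) = 2 * (sl : ℝ) := by
  classical
  have hpos : ∀ i, 0 < levels i := by
    intro i; rw [hlev]; split <;> omega
  set i1 : Fin (2 * sl + 1) := ⟨1, by omega⟩ with hi1
  have h01 : (0 : Fin (2 * sl + 1)) ≠ i1 := by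
    intro h; have := congrArg Fin.val h; simp [hi1] at this
  -- exact division facts
  have P2 : ∀ i₁ i₂ : Fin (2 * sl + 1), i₁ ≠ i₂ →
      levels i₁ * levels i₂ * (2 * sl ^ 2 / (levels i₁ * levels i₂)) = 2 * sl ^ 2 := by
    intro i₁ i₂ h
    apply Nat.mul_div_cancel'
    rw [hlev i₁, hlev i₂]
    split_ifs with h1 h2
    · exact absurd (h1.trans h2.symm) h
    · exact ⟨1, by ring⟩
    · exact ⟨1, by ring⟩
    · exact ⟨2, by ring⟩
  set d : Fin (2 * sl + 1) → Fin (2 * sl ^ 2) → Fin (2 * sl ^ 2) → ℝ :=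
    fun i r r' => if D r i = D r' i then 1 else 0 with hd
  have NR : ((2 * sl ^ 2 : ℕ) : ℝ) = 2 * (sl : ℝ) ^ 2 := by push_cast; ring
  -- first moment
  have m1 : ∀ i, (levels i : ℝ) * (∑ r, ∑ r', d i r r') = (2 * (sl : ℝ) ^ 2) ^ 2 := by
    intro i
    set i₂ : Fin (2 * sl + 1) := if i = 0 then i1 else 0 with hi2
    have hne : i ≠ i₂ := by
      rw [hi2]; split_ifs with h
      · rw [h]; exact h01
      · exact h
    have inner : ∀ r, ∑ r', d i r r'
        = ((levels i₂ * (2 * sl ^ 2 / (levels i * levels i₂)) : ℕ) : ℝ) := by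
      intro r
      have : ∀ r', d i r r' = if D r' i = D r i then (1 : ℝ) else 0 := by
        intro r'; simp [hd, eq_comm]
      rw [Finset.sum_congr rfl fun r' _ => this r', Finset.sum_boole,
        cnt1 hpos D hD hne (D r i)]
    rw [Finset.sum_congr rfl fun r _ => inner r, Finset.sum_const, card_univ, Fintype.card_fin,
      nsmul_eq_mul]
    have : (levels i : ℝ) * ((2 * sl ^ 2 : ℕ) * ((levels i₂ * (2 * sl ^ 2 / (levels i * levels i₂)) : ℕ) : ℝ))
        = ((2 * sl ^ 2 : ℕ) : ℝ) * (((levels i * levels i₂) * (2 * sl ^ 2 / (levels i * levels i₂)) : ℕ) : ℝ) := by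
      push_cast; ring
    rw [this, P2 i i₂ hne, NR]; ring
  -- second moment, off-diagonal
  have m2 : ∀ i i' : Fin (2 * sl + 1), i ≠ i' →
      (levels i : ℝ) * (levels i' : ℝ) * (∑ r, ∑ r', d i r r' * d i' r r')
        = (2 * (sl : ℝ) ^ 2) ^ 2 := by
    intro i i' h
    have inner : ∀ r, ∑ r', d i r r' * d i' r r'
        = ((2 * sl ^ 2 / (levels i * levels i') : ℕ) : ℝ) := by
      intro r
      have : ∀ r', d i r r' * d i' r r'
          = if D r' i = D r i ∧ D r' i' = D r i' then (1 : ℝ) else 0 := by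
        intro r'
        simp only [hd]
        by_cases h1 : D r i = D r' i <;> by_cases h2 : D r i' = D r' i' <;>
          simp [h1, h2, eq_comm]
      rw [Finset.sum_congr rfl fun r' _ => this r', Finset.sum_boole,
        cnt2 hpos D hD h (D r i) (D r i')]
    rw [Finset.sum_congr rfl fun r _ => inner r, Finset.sum_const, card_univ, Fintype.card_fin,
      nsmul_eq_mul]
    have : (levels i : ℝ) * (levels i' : ℝ)
          * ((2 * sl ^ 2 : ℕ) * ((2 * sl ^ 2 / (levels i * levels i') : ℕ) : ℝ))
        = ((2 * sl ^ 2 : ℕ) : ℝ)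
          * (((levels i * levels i') * (2 * sl ^ 2 / (levels i * levels i')) : ℕ) : ℝ) := by
      push_cast; ring
    rw [this, P2 i i' h, NR]; ring
  set H : Fin (2 * sl ^ 2) → Fin (2 * sl ^ 2) → ℝ :=
    fun r r' => ∑ i, (levels i : ℝ) * d i r r' with hH
  set e : Fin (2 * sl ^ 2) → Fin (2 * sl ^ 2) → ℝ :=
    fun r r' => if r = r' then 1 else 0 with he
  have LR : ∑ i, (levels i : ℝ) = 2 * (sl : ℝ) + 2 * (sl : ℝ) * (sl : ℝ) := by
    rw [← Finset.add_sum_erase _ _ (mem_univ (0 : Fin (2 * sl + 1)))]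
    have h0 : levels 0 = 2 * sl := by rw [hlev]; simp
    have hrest : ∑ i ∈ univ.erase (0 : Fin (2 * sl + 1)), (levels i : ℝ)
        = ∑ _i ∈ univ.erase (0 : Fin (2 * sl + 1)), (sl : ℝ) := by
      refine Finset.sum_congr rfl fun i hi => ?_
      rw [hlev, if_neg (Finset.mem_erase.mp hi).1]
    rw [h0, hrest, Finset.sum_const, Finset.card_erase_of_mem (mem_univ _), card_univ,
      Fintype.card_fin, nsmul_eq_mul]
    push_cast; ring
  have ddself : ∀ i r r', d i r r' * d i r r' = d i r r' := by
    intro i r r'; by_cases h : D r i = D r' i <;> simp [hd, h]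
  have SH : ∑ r, ∑ r', H r r' = (2 * (sl : ℝ) + 1) * (2 * (sl : ℝ) ^ 2) ^ 2 := by
    have step : ∑ r, ∑ r', H r r' = ∑ i, (levels i : ℝ) * ∑ r, ∑ r', d i r r' :=
      calc ∑ r, ∑ r', H r r' = ∑ r, ∑ i, ∑ r', (levels i : ℝ) * d i r r' :=
            Finset.sum_congr rfl fun r _ => Finset.sum_comm
        _ = ∑ i, ∑ r, ∑ r', (levels i : ℝ) * d i r r' := Finset.sum_comm
        _ = ∑ i, (levels i : ℝ) * ∑ r, ∑ r', d i r r' := by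
            simp only [← Finset.mul_sum]
    rw [step, Finset.sum_congr rfl fun i _ => m1 i, Finset.sum_const, card_univ,
      Fintype.card_fin, nsmul_eq_mul]
    push_cast; ring
  have SH2 : ∑ r, ∑ r', H r r' * H r r'
      = (2 * (sl : ℝ) + 2 * (sl : ℝ) * (sl : ℝ)) * (2 * (sl : ℝ) ^ 2) ^ 2
        + (2 * (sl : ℝ) + 1) * (2 * (sl : ℝ)) * (2 * (sl : ℝ) ^ 2) ^ 2 := by
    have hHH : ∀ r r', H r r' * H r r'
        = ∑ i, ∑ i', (levels i : ℝ) * (levels i' : ℝ) * (d i r r' * d i' r r') := by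
      intro r r'
      simp only [hH]
      rw [Finset.sum_mul_sum]
      exact Finset.sum_congr rfl fun i _ => Finset.sum_congr rfl fun i' _ => by ring
    have swap : ∑ r, ∑ r', ∑ i, ∑ i', (levels i : ℝ) * (levels i' : ℝ) * (d i r r' * d i' r r')
        = ∑ i, ∑ i', (levels i : ℝ) * (levels i' : ℝ) * ∑ r, ∑ r', d i r r' * d i' r r' :=
      calc ∑ r, ∑ r', ∑ i, ∑ i', (levels i : ℝ) * (levels i' : ℝ) * (d i r r' * d i' r r')
          = ∑ r, ∑ i, ∑ r', ∑ i', (levels i : ℝ) * (levels i' : ℝ) * (d i r r' * d i' r r') :=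
            Finset.sum_congr rfl fun r _ => Finset.sum_comm
        _ = ∑ i, ∑ r, ∑ r', ∑ i', (levels i : ℝ) * (levels i' : ℝ) * (d i r r' * d i' r r') :=
            Finset.sum_comm
        _ = ∑ i, ∑ r, ∑ i', ∑ r', (levels i : ℝ) * (levels i' : ℝ) * (d i r r' * d i' r r') :=
            Finset.sum_congr rfl fun i _ => Finset.sum_congr rfl fun r _ => Finset.sum_comm
        _ = ∑ i, ∑ i', ∑ r, ∑ r', (levels i : ℝ) * (levels i' : ℝ) * (d i r r' * d i' r r') :=
            Finset.sum_congr rfl fun i _ => Finset.sum_comm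
        _ = ∑ i, ∑ i', (levels i : ℝ) * (levels i' : ℝ) * ∑ r, ∑ r', d i r r' * d i' r r' := by
            simp only [← Finset.mul_sum]
    have inner2 : ∀ i, ∑ i', (levels i : ℝ) * (levels i' : ℝ) * ∑ r, ∑ r', d i r r' * d i' r r'
        = (levels i : ℝ) * (2 * (sl : ℝ) ^ 2) ^ 2 + 2 * (sl : ℝ) * (2 * (sl : ℝ) ^ 2) ^ 2 := by
      intro i
      rw [← Finset.add_sum_erase _ _ (mem_univ i)]
      have hdiag : (levels i : ℝ) * (levels i : ℝ) * ∑ r, ∑ r', d i r r' * d i r r'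
          = (levels i : ℝ) * (2 * (sl : ℝ) ^ 2) ^ 2 := by
        have : ∑ r, ∑ r' : Fin (2 * sl ^ 2), d i r r' * d i r r' = ∑ r, ∑ r', d i r r' :=
          Finset.sum_congr rfl fun r _ => Finset.sum_congr rfl fun r' _ => ddself i r r'
        rw [this, mul_assoc, m1 i]
      have hrest : ∑ i' ∈ univ.erase i,
            (levels i : ℝ) * (levels i' : ℝ) * ∑ r, ∑ r', d i r r' * d i' r r'
          = ∑ _i' ∈ univ.erase i, (2 * (sl : ℝ) ^ 2) ^ 2 := by
        refine Finset.sum_congr rfl fun i' hi' => ?_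
        exact m2 i i' (Ne.symm (Finset.mem_erase.mp hi').1)
      rw [hdiag, hrest, Finset.sum_const, Finset.card_erase_of_mem (mem_univ _), card_univ,
        Fintype.card_fin, nsmul_eq_mul]
      push_cast; ring
    rw [Finset.sum_congr rfl fun r _ => Finset.sum_congr rfl fun r' _ => hHH r r', swap,
      Finset.sum_congr rfl fun i _ => inner2 i, Finset.sum_add_distrib, ← Finset.sum_mul, LR,
      Finset.sum_const, card_univ, Fintype.card_fin, nsmul_eq_mul]
    push_cast; ring
  have SHe : ∑ r, ∑ r', H r r' * e r r'
      = 2 * (sl : ℝ) ^ 2 * (2 * (sl : ℝ) + 2 * (sl : ℝ) * (sl : ℝ)) := by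
    have inner : ∀ r : Fin (2 * sl ^ 2), ∑ r', H r r' * e r r'
        = 2 * (sl : ℝ) + 2 * (sl : ℝ) * (sl : ℝ) := by
      intro r
      have h1 : ∀ r', H r r' * e r r' = if r = r' then H r r' else 0 := by
        intro r'; simp only [he]; split_ifs <;> simp
      rw [Finset.sum_congr rfl fun r' _ => h1 r', Finset.sum_ite_eq, if_pos (mem_univ r)]
      have : H r r = ∑ i, (levels i : ℝ) := by
        simp only [hH, hd]
        exact Finset.sum_congr rfl fun i _ => by simp
      rw [this, LR]
    rw [Finset.sum_congr rfl fun r _ => inner r, Finset.sum_const, card_univ, Fintype.card_fin,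
      nsmul_eq_mul]
    push_cast; ring
  have Se : ∑ r, ∑ r' : Fin (2 * sl ^ 2), e r r' = 2 * (sl : ℝ) ^ 2 := by
    have inner : ∀ r : Fin (2 * sl ^ 2), ∑ r', e r r' = 1 := by
      intro r
      simp only [he]
      rw [Finset.sum_ite_eq, if_pos (mem_univ r)]
    rw [Finset.sum_congr rfl fun r _ => inner r, Finset.sum_const, card_univ, Fintype.card_fin,
      nsmul_eq_mul]
    push_cast; ring
  have main : ∑ r, ∑ r',
      (H r r' - 2 * (sl : ℝ) - 2 * (sl : ℝ) ^ 2 * e r r') ^ 2 = 0 := by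
    have point : ∀ r r', (H r r' - 2 * (sl : ℝ) - 2 * (sl : ℝ) ^ 2 * e r r') ^ 2
        = H r r' * H r r' - 2 * (2 * (sl : ℝ)) * H r r'
          - 2 * (2 * (sl : ℝ) ^ 2) * (H r r' * e r r') + (2 * (sl : ℝ)) ^ 2
          + (2 * (2 * (sl : ℝ)) * (2 * (sl : ℝ) ^ 2) + (2 * (sl : ℝ) ^ 2) ^ 2) * e r r' := by
      intro r r'
      rcases eq_or_ne r r' with rfl | hne
      · simp only [he, if_pos rfl]; ring
      · simp only [he, if_neg hne]; ring
    rw [Finset.sum_congr rfl fun r _ => Finset.sum_congr rfl fun r' _ => point r r']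
    simp only [Finset.sum_add_distrib, Finset.sum_sub_distrib, ← Finset.mul_sum,
      Finset.sum_const, card_univ, Fintype.card_fin, nsmul_eq_mul]
    rw [SH, SH2, SHe, Se]
    push_cast; ring
  have h1 := (Finset.sum_eq_zero_iff_of_nonneg fun r _ =>
    Finset.sum_nonneg fun r' _ => sq_nonneg _).mp main
  have h2 := (Finset.sum_eq_zero_iff_of_nonneg fun r' _ => sq_nonneg _).mp
    (h1 r₀ (mem_univ r₀)) r₁ (mem_univ r₁)
  have h3 : H r₀ r₁ - 2 * (sl : ℝ) - 2 * (sl : ℝ) ^ 2 * e r₀ r₁ = 0 := by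
    exact pow_eq_zero_iff (n := 2) (by norm_num) |>.mp h2
  simp only [hH, hd, he, if_neg hrr, mul_zero, sub_zero] at h3
  linarith

theorem statement11 {sl k : ℕ} (hsl : 2 ≤ sl) (hk : 3 ≤ k) (hkn : k ≤ 2 * sl)
    (levels : Fin (2 * sl + 1) → ℕ)
    (hlev : ∀ i, levels i = if i = (0 : Fin (2 * sl + 1)) then 2 * sl else sl)
    (D : Fin (2 * sl ^ 2) → ∀ i, Fin (levels i)) (hD : hasStrength levels D 2)
    (g : Fin k → Fin (2 * sl + 1)) (hg : Function.Injective g)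
    (hg0 : ∀ j, g j ≠ 0)
    (C' : Fin k → Fin sl → Fin (sl - 1) → ℝ) (hC' : ∀ i, isNOC (C' i)) :
    GR (s := fun _ => sl) 3 C'
        (fun r j => Fin.cast ((hlev (g j)).trans (if_neg (hg0 j))) (D r (g j)))
        = 4 - Real.sqrt (((sl : ℝ) - 2) / (2 * (sl : ℝ) - 2)) ∧
      ∀ D'' : Fin (2 * sl ^ 2) → ∀ _ : Fin k, Fin sl,
        hasStrength (fun _ => sl) D'' 2 →
          GR (s := fun _ => sl) 3 C' D'' ≤ 4 - Real.sqrt (((sl : ℝ) - 2) / (2 * (sl : ℝ) - 2)) := by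
  classical
  have hslR : (2 : ℝ) ≤ (sl : ℝ) := by exact_mod_cast hsl
  have hpos : ∀ i, 0 < levels i := by intro i; rw [hlev]; split <;> omega
  have hdiv2 : 2 * sl ^ 2 / (sl * sl) = 2 := by
    have h : 2 * sl ^ 2 = (sl * sl) * 2 := by ring
    rw [h, Nat.mul_div_cancel_left _ (by positivity)]
  -- numeric: sl - 1 ≠ 0 etc.
  have hsl1 : (0 : ℝ) < (sl : ℝ) - 1 := by linarith
  -- sInf of the constant image
  have hsinf : ∀ U : Finset (Fin k), U.card = 3 →
      ((sInf ((fun _ : Fin k => sl) '' (U : Set (Fin k))) : ℕ) : ℝ) = (sl : ℝ) := by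
    intro U hU
    have hne : (U : Set (Fin k)).Nonempty := by
      rw [Finset.coe_nonempty, ← Finset.card_pos, hU]; norm_num
    rw [Set.Nonempty.image_const hne, csInf_singleton]
  -- key quantity: target value
  set tgt : ℝ := ((sl : ℝ) - 2) / (2 * (sl : ℝ) - 2) with htgt
  have htgt' : (((sl : ℝ) - 2) / 2) / ((sl : ℝ) - 1) = tgt := by
    rw [div_div, htgt]
    congr 1
    ring
  -- a subset of card 3 exists
  obtain ⟨U₀, -, hU₀⟩ := Finset.exists_subset_card_eq
    (show 3 ≤ (univ : Finset (Fin k)).card by rw [card_univ, Fintype.card_fin]; exact hk)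
  -- generic: counting lemmas for an arbitrary strength-2 design with k factors at sl levels
  have hcount : ∀ D'' : Fin (2 * sl ^ 2) → ∀ _ : Fin k, Fin sl,
      hasStrength (fun _ => sl) D'' 2 →
      (∀ i x, ((univ.filter fun r => D'' r i = x).card = 2 * sl)) ∧
      (∀ i₁ i₂ : Fin k, i₁ ≠ i₂ → ∀ x₁ x₂,
        ((univ.filter fun r => D'' r i₁ = x₁ ∧ D'' r i₂ = x₂).card = 2)) := by
    intro D'' hD''
    have hs'' : ∀ i : Fin k, 0 < (fun _ : Fin k => sl) i := fun _ => show 0 < sl by omega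
    constructor
    · intro i x
      set i₂ : Fin k := if i = ⟨0, by omega⟩ then ⟨1, by omega⟩ else ⟨0, by omega⟩ with hi2
      have hne : i ≠ i₂ := by
        rw [hi2]; split_ifs with h
        · rw [h]; intro hc; have := congrArg Fin.val hc; simp at this
        · exact h
      rw [cnt1 hs'' D'' hD'' hne x]
      simp only [hdiv2]
      omega
    · intro i₁ i₂ h x₁ x₂
      rw [cnt2 hs'' D'' hD'' h x₁ x₂]
      simp only [hdiv2]
  -- lower bound on projFreq for any strength-2 design
  have hlow : ∀ D'' : Fin (2 * sl ^ 2) → ∀ _ : Fin k, Fin sl,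
      hasStrength (fun _ => sl) D'' 2 → ∀ U : Finset (Fin k), U.card = 3 →
      ((sl : ℝ) - 2) / 2 ≤ projFreq (s := fun _ => sl) C' D'' U := by
    intro D'' hD'' U hU
    obtain ⟨hc1, hc2⟩ := hcount D'' hD''
    rw [PF hsl D'' C' hC' hc1 hc2 U hU]
    have hM : (2 * (sl : ℝ) ^ 2)
        ≤ ∑ r, ∑ r', ∏ i ∈ U, (if D'' r i = D'' r' i then (1 : ℝ) else 0) := by
      have hdiag : ∀ r : Fin (2 * sl ^ 2),
          (1 : ℝ) ≤ ∑ r', ∏ i ∈ U, (if D'' r i = D'' r' i then (1 : ℝ) else 0) := by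
        intro r
        have h1 : ∏ i ∈ U, (if D'' r i = D'' r i then (1 : ℝ) else 0) = 1 := by
          simp
        calc (1 : ℝ) = ∏ i ∈ U, (if D'' r i = D'' r i then (1 : ℝ) else 0) := h1.symm
          _ ≤ ∑ r', ∏ i ∈ U, (if D'' r i = D'' r' i then (1 : ℝ) else 0) :=
            Finset.single_le_sum (f := fun r' => ∏ i ∈ U, (if D'' r i = D'' r' i then (1 : ℝ) else 0))
              (fun r' _ => Finset.prod_nonneg fun i _ => by positivity) (mem_univ r)
      calc (2 : ℝ) * (sl : ℝ) ^ 2 = ∑ _r : Fin (2 * sl ^ 2), (1 : ℝ) := by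
            rw [Finset.sum_const, card_univ, Fintype.card_fin, nsmul_eq_mul, mul_one]
            push_cast; ring
        _ ≤ _ := Finset.sum_le_sum fun r _ => hdiag r
    have hN : ((2 * sl ^ 2 : ℕ) : ℝ) = 2 * (sl : ℝ) ^ 2 := by push_cast; ring
    rw [hN, div_le_div_iff₀ (by norm_num) (by positivity)] at *
    · nlinarith [hM, hslR]
  -- the G set for a design
  have hGset : ∀ D'' : Fin (2 * sl ^ 2) → ∀ _ : Fin k, Fin sl,
      BddAbove {v : ℝ | ∃ U : Finset (Fin k), U.card = 3 ∧
        v = projFreq (s := fun _ => sl) C' D'' U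
          / (((sInf ((fun _ : Fin k => sl) '' (U : Set (Fin k))) : ℕ) : ℝ) - 1)} := by
    intro D''
    apply Set.Finite.bddAbove
    have : {v : ℝ | ∃ U : Finset (Fin k), U.card = 3 ∧
        v = projFreq (s := fun _ => sl) C' D'' U
          / (((sInf ((fun _ : Fin k => sl) '' (U : Set (Fin k))) : ℕ) : ℝ) - 1)}
        ⊆ Set.range (fun U : Finset (Fin k) => projFreq (s := fun _ => sl) C' D'' U
          / (((sInf ((fun _ : Fin k => sl) '' (U : Set (Fin k))) : ℕ) : ℝ) - 1)) := by
      rintro v ⟨U, -, rfl⟩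
      exact ⟨U, rfl⟩
    exact (Set.finite_range _).subset this
  -- the projected design
  set E : Fin (2 * sl ^ 2) → Fin k → Fin sl :=
    fun r j => Fin.cast ((hlev (g j)).trans (if_neg (hg0 j))) (D r (g j)) with hE
  have hEiff : ∀ r r' j, E r j = E r' j ↔ D r (g j) = D r' (g j) := by
    intro r r' j; rw [hE]; simp [Fin.ext_iff]
  have hgE : ∀ j, levels (g j) = sl := fun j => (hlev (g j)).trans (if_neg (hg0 j))
  have hc1E : ∀ i x, ((univ.filter fun r => E r i = x).card = 2 * sl) := by
    intro i x
    set i2 : Fin k := if i = ⟨0, by omega⟩ then ⟨1, by omega⟩ else ⟨0, by omega⟩ with hi2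
    have hne : i ≠ i2 := by
      rw [hi2]; split_ifs with h
      · rw [h]; intro hc; have := congrArg Fin.val hc; simp at this
      · exact h
    have hgne : g i ≠ g i2 := fun hc => hne (hg hc)
    have hfe : (univ.filter fun r => E r i = x)
        = (univ.filter fun r => D r (g i) = Fin.cast (hgE i).symm x) := by
      refine Finset.filter_congr fun r _ => ?_
      rw [hE]; simp [Fin.ext_iff]
    rw [hfe, cnt1 hpos D hD hgne _, hgE, hgE, hdiv2]
    omega
  have hc2E : ∀ i₁ i₂ : Fin k, i₁ ≠ i₂ → ∀ x₁ x₂,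
      ((univ.filter fun r => E r i₁ = x₁ ∧ E r i₂ = x₂).card = 2) := by
    intro i₁ i₂ h x₁ x₂
    have hgne : g i₁ ≠ g i₂ := fun hc => h (hg hc)
    have hfe : (univ.filter fun r => E r i₁ = x₁ ∧ E r i₂ = x₂)
        = (univ.filter fun r => D r (g i₁) = Fin.cast (hgE i₁).symm x₁
            ∧ D r (g i₂) = Fin.cast (hgE i₂).symm x₂) := by
      refine Finset.filter_congr fun r _ => ?_
      rw [hE]; simp [Fin.ext_iff]
    rw [hfe, cnt2 hpos D hD hgne _ _, hgE, hgE, hdiv2]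
  -- no two distinct runs coincide in three s-level factors
  have hMproj : ∀ U : Finset (Fin k), U.card = 3 →
      ∑ r, ∑ r', ∏ i ∈ U, (if E r i = E r' i then (1 : ℝ) else 0) = 2 * (sl : ℝ) ^ 2 := by
    intro U hU
    have inner : ∀ r, ∑ r', ∏ i ∈ U, (if E r i = E r' i then (1 : ℝ) else 0) = 1 := by
      intro r
      have hterm : ∀ r', (∏ i ∈ U, (if E r i = E r' i then (1 : ℝ) else 0))
          = if r = r' then 1 else 0 := by
        intro r'
        rcases eq_or_ne r r' with rfl | hne
        · simp
        · rw [if_neg hne, Finset.prod_boole, if_neg]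
          intro hall
          obtain ⟨a, b, c, hab, hac, hbc, rfl⟩ := Finset.card_eq_three.mp hU
          have hka := key hsl levels hlev D hD hne
          have hsub : ∑ i ∈ ({g a, g b, g c} : Finset (Fin (2 * sl + 1))),
                (levels i : ℝ) * (if D r i = D r' i then 1 else 0)
              ≤ ∑ i, (levels i : ℝ) * (if D r i = D r' i then 1 else 0) :=
            Finset.sum_le_sum_of_subset_of_nonneg (Finset.subset_univ _)
              (fun i _ _ => mul_nonneg (Nat.cast_nonneg _) (by positivity))
          have hga : D r (g a) = D r' (g a) := (hEiff r r' a).mp (hall a (by simp))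
          have hgb : D r (g b) = D r' (g b) := (hEiff r r' b).mp (hall b (by simp))
          have hgc : D r (g c) = D r' (g c) := (hEiff r r' c).mp (hall c (by simp))
          have h3 : ∑ i ∈ ({g a, g b, g c} : Finset (Fin (2 * sl + 1))),
              (levels i : ℝ) * (if D r i = D r' i then 1 else 0) = 3 * (sl : ℝ) := by
            rw [Finset.sum_insert (by simp [hg.ne hab, hg.ne hac]),
              Finset.sum_insert (by simp [hg.ne hbc]), Finset.sum_singleton,
              if_pos hga, if_pos hgb, if_pos hgc, hgE, hgE, hgE]
            ring
          rw [hka, h3] at hsub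
          linarith
      rw [Finset.sum_congr rfl fun r' _ => hterm r', Finset.sum_ite_eq, if_pos (mem_univ r)]
    rw [Finset.sum_congr rfl fun r _ => inner r, Finset.sum_const, card_univ, Fintype.card_fin,
      nsmul_eq_mul, mul_one]
    push_cast; ring
  have hpfE : ∀ U : Finset (Fin k), U.card = 3 →
      projFreq (s := fun _ => sl) C' E U = ((sl : ℝ) - 2) / 2 := by
    intro U hU
    rw [PF hsl E C' hC' hc1E hc2E U hU, hMproj U hU]
    have hcast : ((2 * sl ^ 2 : ℕ) : ℝ) = 2 * (sl : ℝ) ^ 2 := by push_cast; ring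
    have hsl0 : (sl : ℝ) ≠ 0 := by positivity
    rw [hcast]
    field_simp
  constructor
  · -- exact GR value for the projection
    unfold GR
    have hSeq : {v : ℝ | ∃ U : Finset (Fin k), U.card = 3 ∧
        v = projFreq (s := fun _ => sl) C' E U
          / (((sInf ((fun _ : Fin k => sl) '' (U : Set (Fin k))) : ℕ) : ℝ) - 1)} = {tgt} := by
      ext v
      simp only [Set.mem_setOf_eq, Set.mem_singleton_iff]
      constructor
      · rintro ⟨U, hU, rfl⟩
        rw [hpfE U hU, hsinf U hU, htgt']
      · rintro rfl
        exact ⟨U₀, hU₀, by rw [hpfE U₀ hU₀, hsinf U₀ hU₀, htgt']⟩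
    rw [hSeq, csSup_singleton]
    norm_num [htgt]
  · -- optimality
    intro D'' hD''
    unfold GR
    have hmem : projFreq (s := fun _ => sl) C' D'' U₀ / ((sl : ℝ) - 1)
        ∈ {v : ℝ | ∃ U : Finset (Fin k), U.card = 3 ∧
          v = projFreq (s := fun _ => sl) C' D'' U
            / (((sInf ((fun _ : Fin k => sl) '' (U : Set (Fin k))) : ℕ) : ℝ) - 1)} :=
      ⟨U₀, hU₀, by rw [hsinf U₀ hU₀]⟩
    have hv : tgt ≤ sSup {v : ℝ | ∃ U : Finset (Fin k), U.card = 3 ∧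
        v = projFreq (s := fun _ => sl) C' D'' U
          / (((sInf ((fun _ : Fin k => sl) '' (U : Set (Fin k))) : ℕ) : ℝ) - 1)} := by
      refine le_trans ?_ (le_csSup (hGset D'') hmem)
      rw [← htgt']
      have := hlow D'' hD'' U₀ hU₀
      gcongr
    have hs := Real.sqrt_le_sqrt hv
    have h3 : ((3 : ℕ) : ℝ) = 3 := by norm_num
    rw [h3, htgt] at *
    linarith [hs]
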